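/- For a Euclidean metrized algebra (A, ∙, h): 4·sec_∙(x, y) = sec_∘(x, y) + sec_{[·,·]}(x, y) for all linearly independent x, y, where ∘ is the symmetrized product and [·,·] the commutator. Consequently 4·sec_∙(x, y) ≥ sec_∘(x, y), with equality iff x∙y = y∙x. -/

import Mathlib

/-- Sectional nonassociativity of a metrized algebra with respect to a product `m`. -/
noncomputable def secNA {A : Type*} [AddCommGroup A] [Module ℝ A]
    (h : A →ₗ[ℝ] A →ₗ[ℝ] ℝ) (m : A →ₗ[ℝ] A →ₗ[ℝ] A) (x y : A) : ℝ :=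
  (h (m x x) (m y y) - h (m x y) (m y x)) / (h x x * h y y - h x y ^ 2)

/-- For a Euclidean metrized algebra, `4·sec_∙ = sec_∘ + sec_[,]`, hence
`4·sec_∙(x,y) ≥ sec_∘(x,y)` with equality iff `x` and `y` commute. -/
theorem four_sec_eq_sec_sym_add_sec_br
    {A : Type*} [AddCommGroup A] [Module ℝ A]
    (mul : A →ₗ[ℝ] A →ₗ[ℝ] A)
    (h : A →ₗ[ℝ] A →ₗ[ℝ] ℝ)
    (hsymm : ∀ x y : A, h x y = h y x)
    (hpos : ∀ x : A, x ≠ 0 → 0 < h x x)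
    (hinv : ∀ x y z : A, h (mul x y) z = h x (mul y z))
    (sym br : A →ₗ[ℝ] A →ₗ[ℝ] A)
    (hsym : ∀ x y : A, sym x y = mul x y + mul y x)
    (hbr : ∀ x y : A, br x y = mul x y - mul y x) :
    ∀ x y : A, LinearIndependent ℝ ![x, y] →
      (4 * secNA h mul x y = secNA h sym x y + secNA h br x y) ∧
      secNA h sym x y ≤ 4 * secNA h mul x y ∧
      (4 * secNA h mul x y = secNA h sym x y ↔ mul x y = mul y x) := by
  intro x y hli
  rw [LinearIndependent.pair_iff] at hli
  set D : ℝ := h x x * h y y - h x y ^ 2 with hD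
  have hx0 : x ≠ 0 := by
    intro hx
    have := (hli 1 0 (by simp [hx])).1
    norm_num at this
  have hxx : 0 < h x x := hpos x hx0
  set z : A := h x x • y - h x y • x with hz
  have hz0 : z ≠ 0 := by
    intro hz0
    have h1 : (-(h x y)) • x + (h x x) • y = 0 := by
      rw [← hz0, hz]; module
    exact absurd (hli _ _ h1).2 (ne_of_gt hxx)
  have hzz : h z z = h x x * D := by
    simp only [hz, hD, map_sub, map_smul, LinearMap.sub_apply, LinearMap.smul_apply,
      smul_eq_mul]
    rw [hsymm y x]
    ring
  have hDpos : 0 < D := by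
    have hp := hpos z hz0
    rw [hzz] at hp
    nlinarith
  -- numerator identity
  have num : (h (sym x x) (sym y y) - h (sym x y) (sym y x))
      + (h (br x x) (br y y) - h (br x y) (br y x))
      = 4 * (h (mul x x) (mul y y) - h (mul x y) (mul y x)) := by
    simp only [hsym, hbr, map_add, map_sub, LinearMap.add_apply, LinearMap.sub_apply]
    rw [hsymm (mul y x) (mul x y)]
    ring
  have e1 : 4 * secNA h mul x y = secNA h sym x y + secNA h br x y := by
    unfold secNA
    rw [← add_div, num]
    ring
  set c : A := mul x y - mul y x with hc
  have hbrv : secNA h br x y = h c c / D := by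
    unfold secNA
    congr 1
    have h1 : br x x = 0 := by rw [hbr, sub_self]
    have h2 : br y x = -c := by rw [hbr, hc]; abel
    rw [h1, hbr x y, ← hc, h2]
    simp
  have hcc : 0 ≤ h c c := by
    by_cases hc0 : c = 0
    · simp [hc0]
    · exact (hpos c hc0).le
  refine ⟨e1, ?_, ?_⟩
  · have : 0 ≤ h c c / D := div_nonneg hcc hDpos.le
    rw [e1, hbrv]
    linarith
  · rw [e1, hbrv]
    constructor
    · intro he
      have h0 : h c c / D = 0 := by linarith
      have h0' : h c c = 0 := by
        rcases div_eq_zero_iff.mp h0 with h' | h'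
        · exact h'
        · exact absurd h' (ne_of_gt hDpos)
      have hc0 : c = 0 := by
        by_contra hcn
        exact absurd h0' (ne_of_gt (hpos c hcn))
      rw [hc] at hc0
      exact sub_eq_zero.mp hc0
    · intro he
      have hc0 : c = 0 := by rw [hc, he, sub_self]
      rw [hc0]
      simp
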